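/- Let H be an inner product space (over ℝ or ℂ) of dimension at least two, let n ≥ 1, and let real coefficients c_A be given for each subset A ⊆ {1,…,n}. For each two-element subset B ⊆ {1,…,n}, set a_B = c_B + ∑_{A ⊆ {1,…,n}, |A| ≥ 3, B ⊆ A} c_A. Then the identity ∑_{A ⊆ {1,…,n}} c_A ‖x_A‖² = 0 holds for all x_1, …, x_n ∈ H if and only if both: (1) a_B = 0 for every two-element subset B ⊆ {1,…,n}, and (2) for every unit vector u ∈ H and every index 1 ≤ i ≤ n, the substitution x_i = u and x_j = 0 for all j ≠ i gives ∑_{A ⊆ {1,…,n}} c_A ‖x_A‖² = 0. -/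

import Mathlib

open Finset

theorem stmt2 {𝕜 H : Type*} [RCLike 𝕜] [NormedAddCommGroup H] [InnerProductSpace 𝕜 H]
    (hdim : 2 ≤ Module.rank 𝕜 H) (n : ℕ) (hn : 1 ≤ n)
    (c : Finset (Fin n) → ℝ) :
    (∀ x : Fin n → H, ∑ A : Finset (Fin n), c A * ‖∑ i ∈ A, x i‖ ^ 2 = 0) ↔
      ((∀ B : Finset (Fin n), B.card = 2 →
          c B + ∑ A ∈ (Finset.univ : Finset (Finset (Fin n))).filter
              (fun A => 3 ≤ A.card ∧ B ⊆ A), c A = 0) ∧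
        (∀ u : H, ‖u‖ = 1 → ∀ i : Fin n,
          ∑ A : Finset (Fin n),
            c A * ‖∑ j ∈ A, (if j = i then u else 0)‖ ^ 2 = 0)) := by
  classical
  set S : Fin n → Fin n → ℝ :=
    fun i j => ∑ A ∈ univ.filter (fun A => i ∈ A ∧ j ∈ A), c A with hS
  -- expansion lemma
  have key : ∀ x : Fin n → H, ∑ A : Finset (Fin n), c A * ‖∑ i ∈ A, x i‖ ^ 2
      = ∑ i : Fin n, ∑ j : Fin n, S i j * RCLike.re (inner 𝕜 (x i) (x j)) := by
    intro x
    have hnorm : ∀ A : Finset (Fin n), ‖∑ i ∈ A, x i‖ ^ 2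
        = ∑ i ∈ A, ∑ j ∈ A, RCLike.re (inner 𝕜 (x i) (x j)) := by
      intro A
      rw [← inner_self_eq_norm_sq (𝕜 := 𝕜), sum_inner]
      simp [inner_sum, map_sum]
    have swap : ∀ (s : Finset (Finset (Fin n))) (h : Finset (Fin n) → Fin n → ℝ),
        ∑ A ∈ s, ∑ i ∈ A, h A i = ∑ i : Fin n, ∑ A ∈ s.filter (fun A => i ∈ A), h A i := by
      intro s h
      have h1 : ∀ A : Finset (Fin n), ∑ i ∈ A, h A i
          = ∑ i : Fin n, if i ∈ A then h A i else 0 := by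
        intro A; rw [sum_ite_mem, univ_inter]
      simp only [h1]
      rw [Finset.sum_comm]
      exact sum_congr rfl fun i _ => (sum_filter _ _).symm
    simp only [hnorm, mul_sum]
    rw [swap]
    refine sum_congr rfl fun i _ => ?_
    rw [swap]
    refine sum_congr rfl fun j _ => ?_
    rw [filter_filter, sum_mul]
  -- existence of a unit vector
  have hnt : Nontrivial H := by
    rw [← rank_pos_iff_nontrivial (R := 𝕜)]
    exact lt_of_lt_of_le (by norm_num) hdim
  obtain ⟨v, hv⟩ := exists_ne (0 : H)
  set u : H := ((‖v‖⁻¹ : ℝ) : 𝕜) • v with hu_def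
  have hu : ‖u‖ = 1 := by
    rw [hu_def, norm_smul, RCLike.norm_ofReal, abs_inv, abs_norm,
      inv_mul_cancel₀ (norm_ne_zero_iff.2 hv)]
  -- relation between the a_B condition and S
  have hSB : ∀ (i j : Fin n), i ≠ j →
      S i j = c {i, j} + ∑ A ∈ univ.filter (fun A => 3 ≤ A.card ∧ ({i, j} : Finset (Fin n)) ⊆ A),
        c A := by
    intro i j hij
    have hcard : ({i, j} : Finset (Fin n)).card = 2 := by
      rw [card_insert_of_notMem (by simpa using hij), card_singleton]
    have hfe : univ.filter (fun A => i ∈ A ∧ j ∈ A)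
        = insert ({i, j} : Finset (Fin n))
            (univ.filter (fun A => 3 ≤ A.card ∧ ({i, j} : Finset (Fin n)) ⊆ A)) := by
      ext A
      simp only [mem_filter, mem_univ, true_and, mem_insert, insert_subset_iff,
        singleton_subset_iff]
      constructor
      · rintro ⟨hi, hj⟩
        by_cases hAB : A = {i, j}
        · exact Or.inl hAB
        · refine Or.inr ⟨?_, hi, hj⟩
          have hsub : ({i, j} : Finset (Fin n)) ⊆ A := by
            simp [insert_subset_iff, hi, hj]
          have h2 : 2 ≤ A.card := hcard ▸ card_le_card hsub
          rcases lt_or_eq_of_le h2 with h | h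
          · exact h
          · exact absurd (eq_of_subset_of_card_le hsub (hcard.trans h).ge).symm hAB
      · rintro (rfl | ⟨_, hi, hj⟩)
        · simp
        · exact ⟨hi, hj⟩
    have hnm : ({i, j} : Finset (Fin n)) ∉
        univ.filter (fun A => 3 ≤ A.card ∧ ({i, j} : Finset (Fin n)) ⊆ A) := by
      simp [hcard]
    rw [hS]
    simp only
    rw [hfe, sum_insert hnm]
  -- the plug-in lemma
  have plug : ∀ B : Finset (Fin n),
      (∑ A : Finset (Fin n), c A * ‖∑ k ∈ A, (if k ∈ B then u else 0)‖ ^ 2 = 0) →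
      ∑ k ∈ B, ∑ l ∈ B, S k l = 0 := by
    intro B hB0
    rw [key] at hB0
    have hred : ∀ (g : Fin n → ℝ), (∑ k : Fin n, if k ∈ B then g k else 0) = ∑ k ∈ B, g k :=
      fun g => by rw [sum_ite_mem, univ_inter]
    have heval : ∀ k : Fin n,
        (∑ l : Fin n, S k l *
            RCLike.re (inner 𝕜 (if k ∈ B then u else 0) (if l ∈ B then u else 0)))
          = if k ∈ B then ∑ l ∈ B, S k l else 0 := by
      intro k
      by_cases hk : k ∈ B
      · simp only [if_pos hk]
        rw [← hred fun l => S k l]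
        refine sum_congr rfl fun l _ => ?_
        by_cases hl : l ∈ B <;>
          simp [hk, hl, inner_self_eq_norm_sq (𝕜 := 𝕜), hu]
      · simp only [if_neg hk, inner_zero_left, map_zero, mul_zero, sum_const_zero]
    rw [← hred]
    simp only [← heval]
    exact hB0
  -- symmetry of S
  have hsymm : ∀ i j : Fin n, S i j = S j i := by
    intro i j
    rw [hS]
    simp only
    exact sum_congr (by ext A; simp [and_comm]) fun _ _ => rfl
  constructor
  · intro hx
    have hSii : ∀ i : Fin n, S i i = 0 := by
      intro i
      have := plug {i} (hx _)
      simpa using this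
    have hSij : ∀ i j : Fin n, S i j = 0 := by
      intro i j
      by_cases hij : i = j
      · subst hij; exact hSii i
      · have := plug {i, j} (hx _)
        rw [sum_pair hij] at this
        rw [sum_pair hij, sum_pair hij] at this
        have h1 := hSii i
        have h2 := hSii j
        have h3 := hsymm i j
        linarith
    refine ⟨?_, fun u' _ i => hx _⟩
    intro B hB
    obtain ⟨i, j, hij, rfl⟩ := Finset.card_eq_two.1 hB
    rw [← hSB i j hij]
    exact hSij i j
  · rintro ⟨h1, h2⟩ x
    rw [key]
    have hSii : ∀ i : Fin n, S i i = 0 := by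
      intro i
      have h0 : ∑ A : Finset (Fin n),
          c A * ‖∑ k ∈ A, (if k ∈ ({i} : Finset (Fin n)) then u else 0)‖ ^ 2 = 0 := by
        have := h2 u hu i
        simpa [mem_singleton] using this
      simpa using plug {i} h0
    have hSij : ∀ i j : Fin n, S i j = 0 := by
      intro i j
      by_cases hij : i = j
      · subst hij; exact hSii i
      · rw [hSB i j hij]
        exact h1 {i, j} (by rw [card_insert_of_notMem (by simpa using hij), card_singleton])
    simp [hSij]
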